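/- For every Y ∈ m₁ and every Z ∈ m₂ ⊕ m₃ one has [Y, f₄Z] + f₄([Y, Z]) = 0 (note that [Y,Z] ∈ m₂ ⊕ m₃ by the bracket relations [m₁,m₂] ⊆ m₃ and [m₁,m₃] ⊆ m₂, so f₄([Y,Z]) is defined). -/

import Mathlib

namespace SO4

/-- The matrix `E_{pq}` with `1` in position `(p,q)` and `0` elsewhere (indices `0,…,3`
correspond to the paper's `1,…,4`). -/
def E (p q : Fin 4) : Matrix (Fin 4) (Fin 4) ℝ := Matrix.single p q 1

/-- The element of `m` with coordinates `(a, b₁, b₂, c₁, c₂)`. -/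
noncomputable def M (a b1 b2 c1 c2 : ℝ) : Matrix (Fin 4) (Fin 4) ℝ :=
  a • (E 0 1 - E 1 0) + b1 • (E 0 2 - E 2 0) + b2 • (E 0 3 - E 3 0) +
    c1 • (E 1 2 - E 2 1) + c2 • (E 1 3 - E 3 1)

/-- `h = span{E₃₄ − E₄₃}`, the embedded `so(2)`. -/
def hsub : Submodule ℝ (Matrix (Fin 4) (Fin 4) ℝ) := Submodule.span ℝ {E 2 3 - E 3 2}

/-- `m₁ = span{E₁₂ − E₂₁}`. -/
def m1 : Submodule ℝ (Matrix (Fin 4) (Fin 4) ℝ) := Submodule.span ℝ {E 0 1 - E 1 0}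

/-- `m₂ = span{E₁₃ − E₃₁, E₁₄ − E₄₁}`. -/
def m2 : Submodule ℝ (Matrix (Fin 4) (Fin 4) ℝ) :=
  Submodule.span ℝ {E 0 2 - E 2 0, E 0 3 - E 3 0}

/-- `m₃ = span{E₂₃ − E₃₂, E₂₄ − E₄₂}`. -/
def m3 : Submodule ℝ (Matrix (Fin 4) (Fin 4) ℝ) :=
  Submodule.span ℝ {E 1 2 - E 2 1, E 1 3 - E 3 1}

/-- `m = m₁ ⊕ m₂ ⊕ m₃`. -/
def msum : Submodule ℝ (Matrix (Fin 4) (Fin 4) ℝ) := m1 ⊔ m2 ⊔ m3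

/-- The projection of `X ∈ so(4)` onto `m` along `h` (read off the coordinates
`a = X₁₂, b₁ = X₁₃, b₂ = X₁₄, c₁ = X₂₃, c₂ = X₂₄`). -/
noncomputable def projm (X : Matrix (Fin 4) (Fin 4) ℝ) : Matrix (Fin 4) (Fin 4) ℝ :=
  M (X 0 1) (X 0 2) (X 0 3) (X 1 2) (X 1 3)

/-- The `m₁`-component of `X ∈ m`. -/
noncomputable def P1 (X : Matrix (Fin 4) (Fin 4) ℝ) : Matrix (Fin 4) (Fin 4) ℝ :=
  M (X 0 1) 0 0 0 0

/-- The `m₂`-component of `X ∈ m`. -/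
noncomputable def P2 (X : Matrix (Fin 4) (Fin 4) ℝ) : Matrix (Fin 4) (Fin 4) ℝ :=
  M 0 (X 0 2) (X 0 3) 0 0

/-- The `m₃`-component of `X ∈ m`. -/
noncomputable def P3 (X : Matrix (Fin 4) (Fin 4) ℝ) : Matrix (Fin 4) (Fin 4) ℝ :=
  M 0 0 0 (X 1 2) (X 1 3)

/-- `f₁(a,b₁,b₂,c₁,c₂) = (0, b₂, −b₁, 0, 0)`, acting on `m`. -/
noncomputable def f1 (X : Matrix (Fin 4) (Fin 4) ℝ) : Matrix (Fin 4) (Fin 4) ℝ :=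
  M 0 (X 0 3) (-(X 0 2)) 0 0

/-- `f₂(a,b₁,b₂,c₁,c₂) = (0, 0, 0, c₂, −c₁)`, acting on `m`. -/
noncomputable def f2 (X : Matrix (Fin 4) (Fin 4) ℝ) : Matrix (Fin 4) (Fin 4) ℝ :=
  M 0 0 0 (X 1 3) (-(X 1 2))

/-- `f₃(a,b₁,b₂,c₁,c₂) = (0, b₂, −b₁, c₂, −c₁)`, acting on `m`. -/
noncomputable def f3 (X : Matrix (Fin 4) (Fin 4) ℝ) : Matrix (Fin 4) (Fin 4) ℝ :=
  M 0 (X 0 3) (-(X 0 2)) (X 1 3) (-(X 1 2))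

/-- `f₄(a,b₁,b₂,c₁,c₂) = (0, b₂, −b₁, −c₂, c₁)`, acting on `m`. -/
noncomputable def f4 (X : Matrix (Fin 4) (Fin 4) ℝ) : Matrix (Fin 4) (Fin 4) ℝ :=
  M 0 (X 0 3) (-(X 0 2)) (-(X 1 3)) (X 1 2)

end SO4

open SO4

section Aux

lemma M_eq (a b1 b2 c1 c2 : ℝ) :
    M a b1 b2 c1 c2 = !![0, a, b1, b2; -a, 0, c1, c2; -b1, -c1, 0, 0; -b2, -c2, 0, 0] := by
  ext i j
  fin_cases i <;> fin_cases j <;>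
    simp [M, E, Matrix.single, Matrix.vecHead, Matrix.vecTail]

lemma M02 (a b1 b2 c1 c2 : ℝ) : M a b1 b2 c1 c2 0 2 = b1 := by
  rw [M_eq]; simp [Matrix.vecHead, Matrix.vecTail]

lemma M03 (a b1 b2 c1 c2 : ℝ) : M a b1 b2 c1 c2 0 3 = b2 := by
  rw [M_eq]; simp [Matrix.vecHead, Matrix.vecTail]

lemma M12 (a b1 b2 c1 c2 : ℝ) : M a b1 b2 c1 c2 1 2 = c1 := by
  rw [M_eq]; simp [Matrix.vecHead, Matrix.vecTail]

lemma M13 (a b1 b2 c1 c2 : ℝ) : M a b1 b2 c1 c2 1 3 = c2 := by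
  rw [M_eq]; simp [Matrix.vecHead, Matrix.vecTail]

lemma f4_M (a b1 b2 c1 c2 : ℝ) :
    f4 (M a b1 b2 c1 c2) = M 0 b2 (-b1) (-c2) c1 := by
  rw [f4, M02, M03, M12, M13]

lemma M_add (a b1 b2 c1 c2 a' b1' b2' c1' c2' : ℝ) :
    M a b1 b2 c1 c2 + M a' b1' b2' c1' c2' =
      M (a + a') (b1 + b1') (b2 + b2') (c1 + c1') (c2 + c2') := by
  simp only [M, add_smul]
  abel

lemma M_zero : M 0 0 0 0 0 = 0 := by
  simp [M]

set_option maxHeartbeats 1600000 in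
lemma lie_M (a b1 b2 c1 c2 : ℝ) :
    ⁅M a 0 0 0 0, M 0 b1 b2 c1 c2⁆ = M 0 (a*c1) (a*c2) (-(a*b1)) (-(a*b2)) := by
  rw [Ring.lie_def, M_eq, M_eq, M_eq]
  ext i j
  fin_cases i <;> fin_cases j <;>
    simp [Matrix.mul_apply, Fin.sum_univ_four, Matrix.vecHead, Matrix.vecTail] <;> ring

end Aux

open SO4 in
/-- for every `Y ∈ m₁` and every `Z ∈ m₂ ⊕ m₃` one has
`[Y, f₄Z] + f₄([Y, Z]) = 0` (here `[Y,Z] ∈ m₂ ⊕ m₃`, so `f₄([Y,Z])` is defined). -/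
theorem statement11 :
    ∀ Y ∈ m1, ∀ Z ∈ m2 ⊔ m3, ⁅Y, f4 Z⁆ + f4 ⁅Y, Z⁆ = 0 := by
  intro Y hY Z hZ
  rw [m1, Submodule.mem_span_singleton] at hY
  obtain ⟨a, rfl⟩ := hY
  rw [Submodule.mem_sup] at hZ
  obtain ⟨u, hu, v, hv, rfl⟩ := hZ
  rw [m2, Submodule.mem_span_pair] at hu
  obtain ⟨b1, b2, rfl⟩ := hu
  rw [m3, Submodule.mem_span_pair] at hv
  obtain ⟨c1, c2, rfl⟩ := hv
  have hY' : a • (E 0 1 - E 1 0) = M a 0 0 0 0 := by simp [M]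
  have hZ' : b1 • (E 0 2 - E 2 0) + b2 • (E 0 3 - E 3 0) +
      (c1 • (E 1 2 - E 2 1) + c2 • (E 1 3 - E 3 1)) = M 0 b1 b2 c1 c2 := by
    simp only [M, zero_smul, zero_add]
    abel
  rw [hY', hZ', f4_M, lie_M, lie_M, f4_M, M_add]
  norm_num
  exact M_zero
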